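/- Let A be an associative unital ℂ-algebra, ω ∈ ℂ, and let r₁, …, r_K ∈ A satisfy the braid relations r_i r_{i+1} r_i = r_{i+1} r_i r_{i+1} (for 1 ≤ i ≤ K−1), r_i r_j = r_j r_i whenever |i−j| ≥ 2, and the Hecke condition r_i² = 1 + ω r_i. Define the Jucys–Murphy elements by j₁ = 1 and j_p = r_{p−1} j_{p−1} r_{p−1} for 2 ≤ p ≤ K+1. Then for every 1 ≤ k ≤ K and every n ≥ 1: j_{k+1}ⁿ = r_k j_kⁿ r_k + ω Σ_{s=1}^{n−1} j_k^s r_k j_k^{n−s} + ω² Σ_{s=1}^{n−1} s · j_k^s j_{k+1}^{n−s}. -/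

import Mathlib

open Finset

lemma word8 {A : Type*} [Ring A] (a b z : A)
    (haz : a * z = z * a) (hbr : b * a * b = a * b * a)
    (hib : z * (b * z * b) = (b * z * b) * z) :
    (b*z*b) * (a*(b*z*b)*a) = (a*(b*z*b)*a) * (b*z*b) := by
  have hbr' : ∀ t : A, b*(a*(b*t)) = a*(b*(a*t)) := fun t => by
    simp only [← mul_assoc]; rw [hbr]
  have haz' : ∀ t : A, a*(z*t) = z*(a*t) := fun t => by
    simp only [← mul_assoc]; rw [haz]
  have hza' : ∀ t : A, z*(a*t) = a*(z*t) := fun t => (haz' t).symm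
  have hbrR : b*(a*b) = a*(b*a) := by
    simp only [← mul_assoc]; rw [hbr]
  have hib0 : z*b*z*b = b*z*b*z := by simpa [mul_assoc] using hib
  have hib' : ∀ t : A, z*(b*(z*(b*t))) = b*(z*(b*(z*t))) := fun t => by
    simp only [← mul_assoc]; rw [hib0]
  simp only [mul_assoc]
  calc b*(z*(b*(a*(b*(z*(b*a))))))
      = b*(z*(a*(b*(a*(z*(b*a)))))) := by rw [hbr' (z*(b*a))]
    _ = b*(z*(a*(b*(z*(a*(b*a)))))) := by rw [haz' (b*a)]
    _ = b*(a*(z*(b*(z*(a*(b*a)))))) := by rw [hza' (b*(z*(a*(b*a))))]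
    _ = b*(a*(z*(b*(z*(b*(a*b)))))) := by rw [← hbrR]
    _ = b*(a*(b*(z*(b*(z*(a*b)))))) := by rw [hib' (a*b)]
    _ = a*(b*(z*(b*(a*(b*(z*b)))))) := by
        rw [show a*(b*(z*(b*(a*(b*(z*b)))))) = a*(b*(z*(a*(b*(a*(z*b)))))) from by
              rw [hbr' (z*b)],
            show a*(b*(z*(a*(b*(a*(z*b)))))) = a*(b*(a*(z*(b*(a*(z*b)))))) from by
              rw [hza' (b*(a*(z*b)))],
            show a*(b*(a*(z*(b*(a*(z*b)))))) = a*(b*(a*(z*(b*(z*(a*b)))))) from by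
              rw [haz' b],
            hbr' (z*(b*(z*(a*b))))]


lemma keylem {A : Type*} [Ring A] [Algebra ℂ A] (ω : ℂ) (x y ρ : A)
    (hy : y = ρ * x * ρ) (hρ : ρ * ρ = 1 + ω • ρ) (hc : x * y = y * x) :
    ∀ n : ℕ, 1 ≤ n →
      y ^ n = ρ * x ^ n * ρ + ω • ∑ s ∈ Icc 1 (n - 1), x ^ s * ρ * x ^ (n - s)
        + (ω ^ 2) • ∑ s ∈ Icc 1 (n - 1), s • (x ^ s * y ^ (n - s)) := by
  have hC : Commute x y := hc
  have hcy : ∀ m : ℕ, y * x ^ m = x ^ m * y := fun m => (hC.symm.pow_right m).eq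
  have hyρ : y * ρ = ρ * x + ω • y := by
    rw [hy, mul_assoc (ρ * x), hρ, mul_add, mul_one, mul_smul_comm]
  intro n hn
  induction n, hn using Nat.le_induction with
  | base => simp [hy]
  | succ n hn ih =>
    have hnot : n ∉ Icc 1 (n - 1) := by simp; omega
    have hIcc : Icc 1 n = insert n (Icc 1 (n - 1)) := by
      ext m; simp [Finset.mem_Icc, Finset.mem_insert]; omega
    have hsplit : ∀ f : ℕ → A, (∑ s ∈ Icc 1 n, f s) = f n + ∑ s ∈ Icc 1 (n - 1), f s :=
      fun f => by rw [hIcc, Finset.sum_insert hnot]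
    -- term A
    have hA : y * (ρ * x ^ n * ρ)
        = ρ * x ^ (n+1) * ρ + ω • (x ^ n * ρ * x) + (ω ^ 2) • (x ^ n * y) := by
      simp only [← mul_assoc]
      rw [show y * ρ * x ^ n = (y * ρ) * x ^ n from rfl, hyρ, add_mul, add_mul,
        smul_mul_assoc, smul_mul_assoc, hcy n, mul_assoc ρ x (x ^ n), ← pow_succ' x n,
        show x ^ n * y * ρ = x ^ n * (y * ρ) from mul_assoc _ _ _, hyρ, mul_add,
        ← mul_assoc, mul_smul_comm, smul_add, smul_smul, ← sq, add_assoc]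
    -- term B
    have hB : y * ∑ s ∈ Icc 1 (n - 1), x ^ s * ρ * x ^ (n - s)
        = (∑ s ∈ Icc 1 (n - 1), x ^ s * ρ * x ^ (n + 1 - s)) + (n - 1) • (ω • (x ^ n * y)) := by
      rw [Finset.mul_sum]
      rw [show (∑ s ∈ Icc 1 (n-1), x ^ s * ρ * x ^ (n + 1 - s)) + (n - 1) • (ω • (x ^ n * y))
            = ∑ s ∈ Icc 1 (n-1), (x ^ s * ρ * x ^ (n + 1 - s) + ω • (x ^ n * y)) from by
          rw [Finset.sum_add_distrib, Finset.sum_const, Nat.card_Icc]; norm_num]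
      refine Finset.sum_congr rfl ?_
      intro s hs
      simp only [Finset.mem_Icc] at hs
      have h1 : n - s + 1 = n + 1 - s := by omega
      have h2 : s + (n - s) = n := by omega
      calc y * (x ^ s * ρ * x ^ (n - s))
          = x ^ s * (y * ρ) * x ^ (n - s) := by
            simp only [← mul_assoc]; rw [hcy s]
        _ = x ^ s * ρ * x ^ (n + 1 - s) + ω • (x ^ n * y) := by
            rw [hyρ, mul_add, add_mul, mul_smul_comm, smul_mul_assoc,
              ← mul_assoc (x ^ s) ρ x, mul_assoc (x ^ s * ρ) x, ← pow_succ' x (n - s), h1,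
              mul_assoc (x ^ s) y, hcy (n - s), ← mul_assoc, ← pow_add, h2]
    -- term C
    have hCt : y * ∑ s ∈ Icc 1 (n - 1), s • (x ^ s * y ^ (n - s))
        = ∑ s ∈ Icc 1 (n - 1), s • (x ^ s * y ^ (n + 1 - s)) := by
      rw [Finset.mul_sum]
      refine Finset.sum_congr rfl ?_
      intro s hs
      simp only [Finset.mem_Icc] at hs
      have h1 : n - s + 1 = n + 1 - s := by omega
      rw [mul_smul_comm, ← mul_assoc, hcy s, mul_assoc, ← pow_succ' y (n - s), h1]
    have hns : ∀ d : A, n • d = d + (n - 1) • d := by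
      intro d
      have h : n - 1 + 1 = n := by omega
      conv_lhs => rw [← h]
      rw [succ_nsmul, add_comm]
    calc y ^ (n + 1) = y * y ^ n := pow_succ' y n
      _ = y * (ρ * x ^ n * ρ)
          + ω • (y * ∑ s ∈ Icc 1 (n - 1), x ^ s * ρ * x ^ (n - s))
          + (ω ^ 2) • (y * ∑ s ∈ Icc 1 (n - 1), s • (x ^ s * y ^ (n - s))) := by
          rw [ih, mul_add, mul_add, mul_smul_comm, mul_smul_comm]
      _ = ρ * x ^ (n+1) * ρ + ω • (x ^ n * ρ * x) + (ω ^ 2) • (x ^ n * y)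
          + ω • ((∑ s ∈ Icc 1 (n - 1), x ^ s * ρ * x ^ (n + 1 - s)) + (n - 1) • (ω • (x ^ n * y)))
          + (ω ^ 2) • (∑ s ∈ Icc 1 (n - 1), s • (x ^ s * y ^ (n + 1 - s))) := by
          rw [hA, hB, hCt]
      _ = ρ * x ^ (n + 1) * ρ
          + ω • ∑ s ∈ Icc 1 (n + 1 - 1), x ^ s * ρ * x ^ (n + 1 - s)
          + (ω ^ 2) • ∑ s ∈ Icc 1 (n + 1 - 1), s • (x ^ s * y ^ (n + 1 - s)) := by
          simp only [Nat.add_sub_cancel]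
          rw [hsplit (fun s => x ^ s * ρ * x ^ (n + 1 - s)),
              hsplit (fun s => s • (x ^ s * y ^ (n + 1 - s)))]
          simp only [Nat.add_sub_cancel_left, pow_one]
          rw [smul_add, smul_add, smul_add (ω^2),
            smul_comm ω ((n-1) : ℕ), smul_smul, ← sq,
            smul_comm (ω^2) n, hns ((ω^2) • (x ^ n * y))]
          abel


/-- in a ℂ-algebra with Hecke generators `r₁,…,r_K` and Jucys–Murphy
elements `j₁ = 1`, `j_p = r_{p−1} j_{p−1} r_{p−1}`, one has
`j_{k+1}ⁿ = r_k j_kⁿ r_k + ω Σ_{s=1}^{n−1} j_k^s r_k j_k^{n−s}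
  + ω² Σ_{s=1}^{n−1} s·j_k^s j_{k+1}^{n−s}`. -/
theorem stmt_15 (A : Type*) [Ring A] [Algebra ℂ A] (K : ℕ) (ω : ℂ) (r : ℕ → A)
    (hbraid : ∀ i : ℕ, 1 ≤ i → i + 1 ≤ K →
      r i * r (i + 1) * r i = r (i + 1) * r i * r (i + 1))
    (hcomm : ∀ i j : ℕ, 1 ≤ i → 1 ≤ j → i ≤ K → j ≤ K → i + 2 ≤ j →
      r i * r j = r j * r i)
    (hhecke : ∀ i : ℕ, 1 ≤ i → i ≤ K → r i * r i = 1 + ω • r i)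
    (J : ℕ → A) (hJ1 : J 1 = 1)
    (hJ : ∀ p : ℕ, 2 ≤ p → p ≤ K + 1 → J p = r (p - 1) * J (p - 1) * r (p - 1)) :
    ∀ k n : ℕ, 1 ≤ k → k ≤ K → 1 ≤ n →
      J (k + 1) ^ n
        = r k * J k ^ n * r k
          + ω • ∑ s ∈ Icc 1 (n - 1), J k ^ s * r k * J k ^ (n - s)
          + (ω ^ 2) • ∑ s ∈ Icc 1 (n - 1), s • (J k ^ s * J (k + 1) ^ (n - s)) := by
  -- r i commutes with J p for p + 1 ≤ i
  have lemA : ∀ p i : ℕ, 1 ≤ p → p + 1 ≤ i → i ≤ K → r i * J p = J p * r i := by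
    intro p
    induction p with
    | zero => intro i h0 h1 h2; exact absurd h0 (by omega)
    | succ q ih =>
      intro i h0 h1 h2
      rcases Nat.eq_zero_or_pos q with hq | hq
      · subst hq; rw [hJ1, one_mul, mul_one]
      · have hJq : J (q + 1) = r q * J q * r q := by
          have := hJ (q + 1) (by omega) (by omega)
          simpa using this
        have hcq : r i * r q = r q * r i := (hcomm q i (by omega) (by omega) (by omega) h2 (by omega)).symm
        have hiq : r i * J q = J q * r i := ih i (by omega) (by omega) h2
        rw [hJq]
        have c1 : Commute (r i) (r q) := hcq
        have c2 : Commute (r i) (J q) := hiq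
        exact ((c1.mul_right c2).mul_right c1).eq
  -- adjacent Jucys-Murphy elements commute
  have lemB : ∀ k : ℕ, 1 ≤ k → k ≤ K → J k * J (k + 1) = J (k + 1) * J k := by
    intro k
    induction k with
    | zero => intro h0 _; exact absurd h0 (by omega)
    | succ m ih =>
      intro _ hK
      rcases Nat.eq_zero_or_pos m with hm | hm
      · subst hm; rw [hJ1, one_mul, mul_one]
      · have hJk : J (m + 1) = r m * J m * r m := by
          have := hJ (m + 1) (by omega) (by omega); simpa using this
        have hJk1 : J (m + 2) = r (m + 1) * J (m + 1) * r (m + 1) := by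
          have := hJ (m + 2) (by omega) (by omega); simpa using this
        have haz : r (m + 1) * J m = J m * r (m + 1) :=
          lemA m (m + 1) hm (le_refl _) hK
        have hbr : r m * r (m + 1) * r m = r (m + 1) * r m * r (m + 1) :=
          hbraid m hm hK
        have hib : J m * (r m * J m * r m) = (r m * J m * r m) * J m := by
          have := ih hm (by omega); rwa [hJk] at this
        rw [hJk1, hJk]
        exact word8 (r (m + 1)) (r m) (J m) haz hbr hib
  intro k n hk hkK hn
  have hJk1 : J (k + 1) = r k * J k * r k := by
    have := hJ (k + 1) (by omega) (by omega); simpa using this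
  exact keylem ω (J k) (J (k + 1)) (r k) hJk1 (hhecke k hk hkK)
    (lemB k hk hkK) n hn
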